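/- Let 0 ≤ a < b be real numbers and let Δ be a map on signals such that for every signal x in L²[0,∞), the image y := Δx is again a signal in L²[0,∞). Then the following are equivalent: (i) for all τ ∈ ℝ and all signals x in L²[0,∞), ∫₀^∞ (x − b⁻¹y)(t+τ)·(−a·x + y)(t) dt ≤ ∫₀^∞ (x − b⁻¹y)(t)·(−a·x + y)(t) dt; (ii) for every z ∈ L¹(ℝ) with z(t) ≥ 0 for almost every t and ‖z‖₁ ≤ 1, and every signal x in L²[0,∞), one has ⟨x − b⁻¹y, (−a·x + y) − z∗(−a·x + y)⟩ ≥ 0. -/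

import Mathlib

open MeasureTheory Set Filter Topology

/-- A signal in L²[0,∞): square integrable over ℝ and vanishing on (−∞,0). -/
def IsSignal (x : ℝ → ℝ) : Prop :=
  MemLp x 2 volume ∧ ∀ t < (0:ℝ), x t = 0

/-- Convolution (z∗w)(t) = ∫ z(s)·w(t−s) ds. -/
noncomputable def conv (z w : ℝ → ℝ) : ℝ → ℝ := fun t => ∫ s, z s * w (t - s)

namespace SlopeIQCAux

/-- The shifted correlation functional. -/
noncomputable def F (u v : ℝ → ℝ) (τ : ℝ) : ℝ := ∫ t, u (t + τ) * v t

variable {u v z : ℝ → ℝ}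

lemma translate_memLp (hu : MemLp u 2 (volume : Measure ℝ)) (τ : ℝ) :
    MemLp (fun t => u (t + τ)) 2 (volume : Measure ℝ) :=
  hu.comp_measurePreserving (measurePreserving_add_right volume τ)

lemma translate_sub_memLp (hv : MemLp v 2 (volume : Measure ℝ)) (s : ℝ) :
    MemLp (fun t => v (t - s)) 2 (volume : Measure ℝ) := by
  simpa [sub_eq_add_neg] using translate_memLp hv (-s)

lemma integrable_mul2 {α : Type*} [MeasurableSpace α] {μ : Measure α} {f g : α → ℝ}
    (hf : MemLp f 2 μ) (hg : MemLp g 2 μ) : Integrable (fun t => f t * g t) μ := by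
  refine ((hf.integrable_sq.add hg.integrable_sq).const_mul (2⁻¹ : ℝ)).mono'
    (hf.aestronglyMeasurable.mul hg.aestronglyMeasurable) ?_
  filter_upwards with t
  rw [Real.norm_eq_abs, abs_mul]
  simp only [Pi.add_apply]
  nlinarith [sq_nonneg (|f t| - |g t|), sq_abs (f t), sq_abs (g t),
    abs_nonneg (f t), abs_nonneg (g t)]

lemma integral_abs_mul_le {α : Type*} [MeasurableSpace α] {μ : Measure α} {f g : α → ℝ}
    (hf : MemLp f 2 μ) (hg : MemLp g 2 μ) :
    ∫ t, |f t * g t| ∂μ ≤ Real.sqrt (∫ t, f t ^ 2 ∂μ) * Real.sqrt (∫ t, g t ^ 2 ∂μ) := by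
  have hpq : Real.HolderConjugate 2 2 := ⟨by norm_num, by norm_num, by norm_num⟩
  have h2 : ENNReal.ofReal (2 : ℝ) = 2 := by norm_num
  have H := integral_mul_norm_le_Lp_mul_Lq (μ := μ) hpq (h2.symm ▸ hf) (h2.symm ▸ hg)
  have e1 : ∀ h : α → ℝ, (∫ t, ‖h t‖ ^ (2:ℝ) ∂μ) = ∫ t, h t ^ 2 ∂μ := by
    intro h
    refine integral_congr_ae (Eventually.of_forall fun t => ?_)
    show ‖h t‖ ^ (2:ℝ) = h t ^ 2
    rw [show ((2:ℝ)) = ((2:ℕ):ℝ) by norm_num, Real.rpow_natCast, Real.norm_eq_abs, sq_abs]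
  calc ∫ t, |f t * g t| ∂μ = ∫ t, ‖f t‖ * ‖g t‖ ∂μ := by
        simp [abs_mul, Real.norm_eq_abs]
    _ ≤ (∫ t, ‖f t‖ ^ (2:ℝ) ∂μ) ^ ((1:ℝ)/2) * (∫ t, ‖g t‖ ^ (2:ℝ) ∂μ) ^ ((1:ℝ)/2) := H
    _ = Real.sqrt (∫ t, f t ^ 2 ∂μ) * Real.sqrt (∫ t, g t ^ 2 ∂μ) := by
        rw [e1, e1, ← Real.sqrt_eq_rpow, ← Real.sqrt_eq_rpow]

lemma F_eq (u v : ℝ → ℝ) (τ : ℝ) : F u v τ = ∫ s, u s * v (s - τ) := by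
  have h := integral_add_right_eq_self (μ := (volume : Measure ℝ))
    (fun s => u s * v (s - τ)) τ
  simp only [add_sub_cancel_right] at h
  rw [F]; exact h

lemma F_zero (u v : ℝ → ℝ) : F u v 0 = ∫ t, u t * v t := by simp [F]

lemma sq_translate (v : ℝ → ℝ) (s : ℝ) :
    (∫ t, v (t - s) ^ 2) = ∫ t, v t ^ 2 := by
  simpa [sub_eq_add_neg] using
    integral_add_right_eq_self (μ := (volume : Measure ℝ)) (fun t => v t ^ 2) (-s)

lemma abs_F_le (hu : MemLp u 2 (volume : Measure ℝ)) (hv : MemLp v 2 (volume : Measure ℝ))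
    (hv0 : ∀ t < (0:ℝ), v t = 0) (τ : ℝ) :
    |F u v τ| ≤ Real.sqrt (∫ t in Ici τ, u t ^ 2) * Real.sqrt (∫ t, v t ^ 2) := by
  have hvτ := translate_sub_memLp hv τ
  have hrestr : F u v τ = ∫ s in Ici τ, u s * v (s - τ) := by
    rw [F_eq]
    refine (setIntegral_eq_integral_of_forall_compl_eq_zero fun s hs => ?_).symm
    simp only [mem_Ici, not_le] at hs
    rw [hv0 (s - τ) (by linarith), mul_zero]
  rw [hrestr]
  calc |∫ s in Ici τ, u s * v (s - τ)|
      ≤ ∫ s in Ici τ, |u s * v (s - τ)| := by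
        simpa [Real.norm_eq_abs, abs_mul] using
          norm_integral_le_integral_norm (μ := volume.restrict (Ici τ))
            (fun s => u s * v (s - τ))
    _ ≤ Real.sqrt (∫ s in Ici τ, u s ^ 2) * Real.sqrt (∫ s in Ici τ, v (s - τ) ^ 2) :=
        integral_abs_mul_le (hu.restrict _) (hvτ.restrict _)
    _ ≤ Real.sqrt (∫ t in Ici τ, u t ^ 2) * Real.sqrt (∫ t, v t ^ 2) := by
        refine mul_le_mul_of_nonneg_left ?_ (Real.sqrt_nonneg _)
        refine Real.sqrt_le_sqrt ?_
        calc (∫ s in Ici τ, v (s - τ) ^ 2) ≤ ∫ s, v (s - τ) ^ 2 :=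
            setIntegral_le_integral hvτ.integrable_sq
              (Eventually.of_forall fun t => sq_nonneg _)
          _ = ∫ t, v t ^ 2 := sq_translate v τ

lemma abs_F_le' (hu : MemLp u 2 (volume : Measure ℝ)) (hv : MemLp v 2 (volume : Measure ℝ))
    (hv0 : ∀ t < (0:ℝ), v t = 0) (τ : ℝ) :
    |F u v τ| ≤ Real.sqrt (∫ t, u t ^ 2) * Real.sqrt (∫ t, v t ^ 2) :=
  (abs_F_le hu hv hv0 τ).trans <| mul_le_mul_of_nonneg_right
    (Real.sqrt_le_sqrt (setIntegral_le_integral hu.integrable_sq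
      (Eventually.of_forall fun t => sq_nonneg _))) (Real.sqrt_nonneg _)

lemma tail_tendsto {g : ℝ → ℝ} (hg : Integrable g (volume : Measure ℝ)) :
    Tendsto (fun τ => ∫ t in Ici τ, g t) atTop (𝓝 0) := by
  have h := tendsto_setIntegral_of_antitone (f := g) (μ := (volume : Measure ℝ))
    (fun τ : ℝ => measurableSet_Ici)
    (fun i j hij => Ici_subset_Ici.2 hij) ⟨0, hg.integrableOn⟩
  have hempty : (⋂ τ : ℝ, Ici τ) = (∅ : Set ℝ) := by
    ext t
    simp only [mem_iInter, mem_Ici, mem_empty_iff_false, iff_false, not_forall, not_le]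
    exact ⟨t + 1, by linarith⟩
  simpa [hempty] using h

lemma F_tendsto_atTop (hu : MemLp u 2 (volume : Measure ℝ))
    (hv : MemLp v 2 (volume : Measure ℝ)) (hv0 : ∀ t < (0:ℝ), v t = 0) :
    Tendsto (F u v) atTop (𝓝 0) := by
  have h1 := tail_tendsto hu.integrable_sq
  have h2 : Tendsto (fun τ => Real.sqrt (∫ t in Ici τ, u t ^ 2) * Real.sqrt (∫ t, v t ^ 2))
      atTop (𝓝 0) := by
    have := (Real.continuous_sqrt.tendsto 0).comp h1
    simpa using this.mul_const (Real.sqrt (∫ t, v t ^ 2))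
  exact squeeze_zero_norm (fun τ => by simpa [Real.norm_eq_abs] using abs_F_le hu hv hv0 τ) h2

lemma F_continuous (hu : MemLp u 2 (volume : Measure ℝ))
    (hv : MemLp v 2 (volume : Measure ℝ)) : Continuous (F u v) := by
  have hmp : ∀ τ : ℝ, MeasurePreserving (fun t : ℝ => t + τ) volume volume := fun τ =>
    measurePreserving_add_right volume τ
  set g : ℝ → C(ℝ, ℝ) := fun τ => ⟨fun t => t + τ, continuous_id.add continuous_const⟩ with hg
  have hgc : Continuous g := by
    apply ContinuousMap.continuous_of_continuous_uncurry
    exact continuous_snd.add continuous_fst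
  have hmp' : ∀ τ : ℝ, MeasurePreserving (g τ) volume volume := hmp
  have hT : Continuous fun τ : ℝ =>
      Lp.compMeasurePreserving (E := ℝ) (p := 2) (g τ) (hmp' τ) (hu.toLp u) :=
    Continuous.compMeasurePreservingLp continuous_const hgc hmp' (by norm_num)
  have hF : ∀ τ : ℝ, F u v τ = inner (𝕜 := ℝ)
      (Lp.compMeasurePreserving (E := ℝ) (p := 2) (g τ) (hmp' τ) (hu.toLp u)) (hv.toLp v) := by
    intro τ
    rw [MeasureTheory.L2.inner_def]
    have h1 : (Lp.compMeasurePreserving (E := ℝ) (p := 2) (g τ) (hmp' τ) (hu.toLp u) : ℝ → ℝ)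
        =ᵐ[volume] fun t => u (t + τ) := by
      filter_upwards [Lp.coeFn_compMeasurePreserving (hu.toLp u) (hmp' τ),
        (hmp' τ).quasiMeasurePreserving.ae_eq_comp hu.coeFn_toLp] with t h1 h2
      exact h1.trans h2
    have h2 : ((hv.toLp v : Lp ℝ 2 (volume : Measure ℝ)) : ℝ → ℝ) =ᵐ[volume] v := hv.coeFn_toLp
    refine (integral_congr_ae ?_).symm
    filter_upwards [h1, h2] with t h1 h2
    simp only [RCLike.inner_apply, conj_trivial, h1, h2]
    ring
  have : F u v = fun τ => inner (𝕜 := ℝ)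
      (Lp.compMeasurePreserving (E := ℝ) (p := 2) (g τ) (hmp' τ) (hu.toLp u)) (hv.toLp v) :=
    funext hF
  rw [this]
  exact Continuous.inner hT continuous_const

lemma conv_key (hu : MemLp u 2 (volume : Measure ℝ)) (hv : MemLp v 2 (volume : Measure ℝ))
    (hz : Integrable z (volume : Measure ℝ)) :
    Integrable (fun t => u t * conv z v t) (volume : Measure ℝ) ∧
      (∫ t, u t * conv z v t) = ∫ s, z s * F u v s := by
  set C := Real.sqrt (∫ t, u t ^ 2) * Real.sqrt (∫ t, v t ^ 2) with hC
  have hmeas : AEStronglyMeasurable (fun q : ℝ × ℝ => z q.1 * (u q.2 * v (q.2 - q.1)))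
      ((volume : Measure ℝ).prod volume) := by
    have hq : Measure.QuasiMeasurePreserving (fun q : ℝ × ℝ => q.2 - q.1)
        ((volume : Measure ℝ).prod volume) (volume : Measure ℝ) := by
      have := Measure.quasiMeasurePreserving_snd (μ := (volume : Measure ℝ))
        (ν := (volume : Measure ℝ))
      exact this.comp
        (measurePreserving_prod_sub (volume : Measure ℝ) volume).quasiMeasurePreserving
    exact (hz.aestronglyMeasurable.comp_fst).mul
      ((hu.aestronglyMeasurable.comp_snd).mul (hv.aestronglyMeasurable.comp_quasiMeasurePreserving hq))
  have per_s : ∀ s : ℝ, Integrable (fun t => z s * (u t * v (t - s))) volume := fun s =>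
    (integrable_mul2 hu (translate_sub_memLp hv s)).const_mul (z s)
  have bound_s : ∀ s : ℝ, (∫ t, ‖z s * (u t * v (t - s))‖) ≤ |z s| * C := by
    intro s
    have h1 : (∫ t, ‖z s * (u t * v (t - s))‖) = |z s| * ∫ t, |u t * v (t - s)| := by
      rw [← integral_const_mul]
      refine integral_congr_ae (Eventually.of_forall fun t => ?_)
      show ‖z s * (u t * v (t - s))‖ = |z s| * |u t * v (t - s)|
      rw [Real.norm_eq_abs, abs_mul]
    rw [h1]
    refine mul_le_mul_of_nonneg_left ?_ (abs_nonneg _)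
    refine (integral_abs_mul_le hu (translate_sub_memLp hv s)).trans ?_
    rw [sq_translate]
  have key : Integrable (fun q : ℝ × ℝ => z q.1 * (u q.2 * v (q.2 - q.1)))
      ((volume : Measure ℝ).prod volume) := by
    rw [integrable_prod_iff hmeas]
    refine ⟨Eventually.of_forall fun s => per_s s, ?_⟩
    refine (hz.abs.mul_const C).mono' hmeas.norm.integral_prod_right' ?_
    filter_upwards with s
    rw [Real.norm_eq_abs, abs_of_nonneg (integral_nonneg fun t => norm_nonneg _)]
    exact bound_s s
  have hconv_eq : ∀ t : ℝ, (∫ s, z s * (u t * v (t - s))) = u t * conv z v t := by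
    intro t
    rw [conv, ← integral_const_mul]
    congr 1
    funext s
    ring
  constructor
  · exact key.integral_prod_right.congr (Eventually.of_forall fun t => hconv_eq t)
  · have swap := integral_integral_swap (f := fun s t => z s * (u t * v (t - s))) key
    calc (∫ t, u t * conv z v t) = ∫ t, ∫ s, z s * (u t * v (t - s)) :=
          integral_congr_ae (Eventually.of_forall fun t => (hconv_eq t).symm)
      _ = ∫ s, ∫ t, z s * (u t * v (t - s)) := swap.symm
      _ = ∫ s, z s * F u v s := by
          refine integral_congr_ae (Eventually.of_forall fun s => ?_)
          show (∫ t, z s * (u t * v (t - s))) = z s * F u v s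
          rw [integral_const_mul, F_eq]

lemma setIci_mul (hv0 : ∀ t < (0:ℝ), v t = 0) (f : ℝ → ℝ) :
    (∫ t in Ici (0:ℝ), f t * v t) = ∫ t, f t * v t :=
  setIntegral_eq_integral_of_forall_compl_eq_zero fun t ht => by
    simp only [mem_Ici, not_le] at ht
    rw [hv0 t ht, mul_zero]

/-- Forward direction core: the shift inequalities imply the convolution inequality. -/
lemma forward (hu : MemLp u 2 (volume : Measure ℝ)) (hv : MemLp v 2 (volume : Measure ℝ))
    (hv0 : ∀ t < (0:ℝ), v t = 0)
    (hFle : ∀ τ, F u v τ ≤ F u v 0)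
    (hz : Integrable z (volume : Measure ℝ)) (hz0 : ∀ᵐ t ∂(volume : Measure ℝ), 0 ≤ z t)
    (hz1 : (∫ t, |z t|) ≤ 1) :
    0 ≤ ∫ t, u t * (v t - conv z v t) := by
  have hF0 : 0 ≤ F u v 0 :=
    le_of_tendsto (F_tendsto_atTop hu hv hv0) (Eventually.of_forall hFle)
  obtain ⟨hint, heq⟩ := conv_key hu hv hz
  have h1 : Integrable (fun t => u t * v t) volume := integrable_mul2 hu hv
  have hsplit : (∫ t, u t * (v t - conv z v t)) = F u v 0 - ∫ s, z s * F u v s := by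
    simp_rw [mul_sub]
    rw [integral_sub h1 hint, heq, F_zero]
  rw [hsplit]
  have hFc := F_continuous hu hv
  set C := Real.sqrt (∫ t, u t ^ 2) * Real.sqrt (∫ t, v t ^ 2) with hCdef
  have hzF : Integrable (fun s => z s * F u v s) volume := by
    refine (hz.abs.mul_const C).mono'
      (hz.aestronglyMeasurable.mul hFc.aestronglyMeasurable) ?_
    filter_upwards with s
    rw [Real.norm_eq_abs, abs_mul]
    exact mul_le_mul_of_nonneg_left (abs_F_le' hu hv hv0 s) (abs_nonneg _)
  have step1 : (∫ s, z s * F u v s) ≤ ∫ s, z s * F u v 0 := by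
    refine integral_mono_ae hzF (hz.mul_const _) ?_
    filter_upwards [hz0] with s hs
    exact mul_le_mul_of_nonneg_left (hFle s) hs
  have step2 : (∫ s, z s * F u v 0) = (∫ s, z s) * F u v 0 := integral_mul_const _ _
  have hz_eq : (∫ s, z s) = ∫ s, |z s| :=
    integral_congr_ae (hz0.mono fun s hs => (abs_of_nonneg hs).symm)
  have step3 : (∫ s, z s) * F u v 0 ≤ F u v 0 := by
    apply mul_le_of_le_one_left hF0
    rw [hz_eq]; exact hz1
  linarith

/-- Backward direction core: the convolution inequalities imply the shift inequality. -/
lemma backward (hu : MemLp u 2 (volume : Measure ℝ)) (hv : MemLp v 2 (volume : Measure ℝ))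
    (hall : ∀ z : ℝ → ℝ, Integrable z (volume : Measure ℝ) →
      (∀ᵐ t ∂(volume : Measure ℝ), 0 ≤ z t) → (∫ t, |z t|) ≤ 1 →
      0 ≤ ∫ t, u t * (v t - conv z v t)) (τ : ℝ) :
    F u v τ ≤ F u v 0 := by
  have hFc := F_continuous hu hv
  have key : ∀ ε : ℝ, 0 < ε → ε⁻¹ * (∫ s in τ..(τ + ε), F u v s) ≤ F u v 0 := by
    intro ε hε
    set z : ℝ → ℝ := (Ioc τ (τ + ε)).indicator (fun _ => ε⁻¹) with hzdef
    have hznn : ∀ s, 0 ≤ z s := fun s =>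
      Set.indicator_nonneg (fun _ _ => inv_nonneg.2 hε.le) s
    have hzint : Integrable z volume := by
      rw [hzdef, integrable_indicator_iff measurableSet_Ioc]
      exact integrableOn_const (by simp [Real.volume_Ioc])
    have hz1 : (∫ s, |z s|) ≤ 1 := by
      have habs : (∫ s, |z s|) = ∫ s, z s :=
        integral_congr_ae (Eventually.of_forall fun s => abs_of_nonneg (hznn s))
      rw [habs, hzdef, integral_indicator_const _ measurableSet_Ioc]
      rw [Real.volume_real_Ioc_of_le (by linarith)]
      simp only [add_sub_cancel_left, smul_eq_mul]
      rw [mul_inv_cancel₀ hε.ne']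
    have h := hall z hzint (Eventually.of_forall hznn) hz1
    obtain ⟨hint, heq⟩ := conv_key hu hv hzint
    have h1 : Integrable (fun t => u t * v t) volume := integrable_mul2 hu hv
    have hsplit : (∫ t, u t * (v t - conv z v t)) = F u v 0 - ∫ s, z s * F u v s := by
      simp_rw [mul_sub]
      rw [integral_sub h1 hint, heq, F_zero]
    have hzF : (∫ s, z s * F u v s) = ε⁻¹ * ∫ s in τ..(τ + ε), F u v s := by
      rw [intervalIntegral.integral_of_le (by linarith)]
      rw [← integral_const_mul, ← integral_indicator measurableSet_Ioc]
      refine integral_congr_ae (Eventually.of_forall fun s => ?_)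
      by_cases hs : s ∈ Ioc τ (τ + ε) <;> simp [hzdef, Set.indicator_apply, hs]
    rw [hsplit, hzF] at h
    linarith
  have hΨ : HasDerivAt (fun r => ∫ s in τ..r, F u v s) (F u v τ) τ :=
    intervalIntegral.integral_hasDerivAt_right (hFc.intervalIntegrable _ _)
      (hFc.stronglyMeasurableAtFilter _ _) hFc.continuousAt
  have hslope := hasDerivAt_iff_tendsto_slope.mp hΨ
  have hmap : Tendsto (fun ε : ℝ => τ + ε) (𝓝[>] (0:ℝ)) (𝓝[≠] τ) := by
    apply tendsto_nhdsWithin_of_tendsto_nhds_of_eventually_within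
    · have : Tendsto (fun ε : ℝ => τ + ε) (𝓝 (0:ℝ)) (𝓝 τ) := by
        simpa using (continuous_add_left τ).tendsto (0:ℝ)
      exact this.mono_left nhdsWithin_le_nhds
    · filter_upwards [self_mem_nhdsWithin] with ε hε
      have : (0:ℝ) < ε := hε
      simp only [mem_compl_iff, mem_singleton_iff]
      intro hcon
      nlinarith [hcon]
  have hten : Tendsto (fun ε : ℝ => ε⁻¹ * ∫ s in τ..(τ + ε), F u v s)
      (𝓝[>] (0:ℝ)) (𝓝 (F u v τ)) := by
    have hcomp := hslope.comp hmap
    refine hcomp.congr fun ε => ?_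
    simp only [Function.comp_apply, slope_def_field, intervalIntegral.integral_same,
      add_sub_cancel_left, sub_zero]
    rw [div_eq_inv_mul]
  exact le_of_tendsto hten (eventually_nhdsWithin_of_forall fun ε hε => key ε hε)

end SlopeIQCAux

open SlopeIQCAux

theorem slope_iqc_characterization
    (a b : ℝ) (ha : 0 ≤ a) (hab : a < b)
    (Δ : (ℝ → ℝ) → (ℝ → ℝ))
    (hΔ : ∀ x, IsSignal x → IsSignal (Δ x)) :
    (∀ (τ : ℝ) (x : ℝ → ℝ), IsSignal x →
      ∫ t in Ici (0:ℝ), (x (t + τ) - b⁻¹ * Δ x (t + τ)) * (-a * x t + Δ x t)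
        ≤ ∫ t in Ici (0:ℝ), (x t - b⁻¹ * Δ x t) * (-a * x t + Δ x t))
    ↔
    (∀ z : ℝ → ℝ, Integrable z → (∀ᵐ t ∂(volume : Measure ℝ), 0 ≤ z t) →
      (∫ t, |z t|) ≤ 1 →
      ∀ x : ℝ → ℝ, IsSignal x →
        0 ≤ ∫ t, (x t - b⁻¹ * Δ x t) *
          ((-a * x t + Δ x t) - conv z (fun s => -a * x s + Δ x s) t)) := by
  constructor
  · intro hi z hz hz0 hz1 x hx
    obtain ⟨hx2, hx0⟩ := hx
    obtain ⟨hy2, hy0⟩ := hΔ x ⟨hx2, hx0⟩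
    have hu2 : MemLp (fun t => x t - b⁻¹ * Δ x t) 2 (volume : Measure ℝ) :=
      hx2.sub (hy2.const_mul _)
    have hv2 : MemLp (fun t => -a * x t + Δ x t) 2 (volume : Measure ℝ) :=
      (hx2.const_mul _).add hy2
    have hv0 : ∀ t < (0:ℝ), -a * x t + Δ x t = 0 := fun t ht => by
      rw [hx0 t ht, hy0 t ht]; ring
    have hFle : ∀ τ, F (fun t => x t - b⁻¹ * Δ x t) (fun t => -a * x t + Δ x t) τ
        ≤ F (fun t => x t - b⁻¹ * Δ x t) (fun t => -a * x t + Δ x t) 0 := by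
      intro τ
      calc F (fun t => x t - b⁻¹ * Δ x t) (fun t => -a * x t + Δ x t) τ
          = ∫ t in Ici (0:ℝ), (x (t + τ) - b⁻¹ * Δ x (t + τ)) * (-a * x t + Δ x t) :=
            (setIci_mul hv0 (fun t => x (t + τ) - b⁻¹ * Δ x (t + τ))).symm
        _ ≤ ∫ t in Ici (0:ℝ), (x t - b⁻¹ * Δ x t) * (-a * x t + Δ x t) := hi τ x ⟨hx2, hx0⟩
        _ = F (fun t => x t - b⁻¹ * Δ x t) (fun t => -a * x t + Δ x t) 0 :=
            (setIci_mul hv0 (fun t => x t - b⁻¹ * Δ x t)).trans (F_zero _ _).symm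
    exact forward hu2 hv2 hv0 hFle hz hz0 hz1
  · intro hii τ x hx
    obtain ⟨hx2, hx0⟩ := hx
    obtain ⟨hy2, hy0⟩ := hΔ x ⟨hx2, hx0⟩
    have hu2 : MemLp (fun t => x t - b⁻¹ * Δ x t) 2 (volume : Measure ℝ) :=
      hx2.sub (hy2.const_mul _)
    have hv2 : MemLp (fun t => -a * x t + Δ x t) 2 (volume : Measure ℝ) :=
      (hx2.const_mul _).add hy2
    have hv0 : ∀ t < (0:ℝ), -a * x t + Δ x t = 0 := fun t ht => by
      rw [hx0 t ht, hy0 t ht]; ring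
    have hFle : F (fun t => x t - b⁻¹ * Δ x t) (fun t => -a * x t + Δ x t) τ
        ≤ F (fun t => x t - b⁻¹ * Δ x t) (fun t => -a * x t + Δ x t) 0 :=
      backward hu2 hv2 (fun z hz h0 h1 => hii z hz h0 h1 x ⟨hx2, hx0⟩) τ
    calc ∫ t in Ici (0:ℝ), (x (t + τ) - b⁻¹ * Δ x (t + τ)) * (-a * x t + Δ x t)
        = F (fun t => x t - b⁻¹ * Δ x t) (fun t => -a * x t + Δ x t) τ :=
          setIci_mul hv0 (fun t => x (t + τ) - b⁻¹ * Δ x (t + τ))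
      _ ≤ F (fun t => x t - b⁻¹ * Δ x t) (fun t => -a * x t + Δ x t) 0 := hFle
      _ = ∫ t in Ici (0:ℝ), (x t - b⁻¹ * Δ x t) * (-a * x t + Δ x t) :=
          ((setIci_mul hv0 (fun t => x t - b⁻¹ * Δ x t)).trans (F_zero _ _).symm).symm
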